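/- Let (x_n) be a sequence in a topological vector space and let (n_k) be a set of natural numbers with the property: for all p, m ∈ ℕ there exists q ∈ ℕ such that {p + q, p + 2q, ..., p + mq} ⊆ (n_k). Assume x_{n_k - j} → 0 as k → ∞ for every j ≥ 0. Then there exists a set (m_k) of natural numbers which contains, for every m, an arithmetic progression of the form {q, 2q, ..., mq}, and such that x_{m_k + j} → 0 as k → ∞ for every j ≥ 0. -/

import Mathlib

open Filter Topology

theorem lemma_sucesion_alap
    {X : Type*} [AddCommGroup X] [Module ℝ X] [TopologicalSpace X]
    [IsTopologicalAddGroup X] [ContinuousSMul ℝ X] [TopologicalSpace.MetrizableSpace X]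
    (x : ℕ → X) (n : ℕ → ℕ) (hn : StrictMono n)
    (hAP : ∀ p m : ℕ, ∃ q : ℕ, 1 ≤ q ∧
        ∀ j : ℕ, 1 ≤ j → j ≤ m → p + j * q ∈ Set.range n)
    (hconv : ∀ j : ℕ, Tendsto (fun k : ℕ => x (n k - j)) atTop (𝓝 0)) :
    ∃ m' : ℕ → ℕ, StrictMono m' ∧
      (∀ m : ℕ, ∃ q : ℕ, 1 ≤ q ∧ ∀ j : ℕ, 1 ≤ j → j ≤ m → j * q ∈ Set.range m') ∧
      ∀ j : ℕ, Tendsto (fun k : ℕ => x (m' k + j)) atTop (𝓝 0) := by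
  classical
  obtain ⟨U, hUb⟩ := (𝓝 (0 : X)).exists_antitone_basis
  -- choose K m : tail index controlling all shifts t ≤ m into U m
  have hKex : ∀ m : ℕ, ∃ K : ℕ, ∀ i, K ≤ i → ∀ t ≤ m, x (n i - t) ∈ U m := by
    intro m
    have h1 : ∀ᶠ i in atTop, ∀ t ∈ Finset.range (m + 1), x (n i - t) ∈ U m := by
      refine (eventually_all_finset (Finset.range (m + 1))).2 ?_
      intro t _
      exact (hconv t).eventually_mem (hUb.toHasBasis.mem_of_mem trivial)
    obtain ⟨K, hK⟩ := eventually_atTop.1 h1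
    exact ⟨K, fun i hi t ht => hK i hi t (Finset.mem_range.2 (Nat.lt_succ_of_le ht))⟩
  choose K hK using hKex
  -- large-AP existence
  have hQex : ∀ m prev : ℕ, ∃ Q : ℕ, m * prev < Q ∧ n (K (m + 1)) < Q ∧
      ∀ j : ℕ, 1 ≤ j → j ≤ m + 1 → (m + 1) + j * Q ∈ Set.range n := by
    intro m prev
    set B := max (m * prev) (n (K (m + 1))) + 1 with hB
    obtain ⟨q, hq1, hq2⟩ := hAP (m + 1) ((m + 1) * B)
    refine ⟨B * q, ?_, ?_, ?_⟩
    · have : B ≤ B * q := Nat.le_mul_of_pos_right B hq1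
      omega
    · have : B ≤ B * q := Nat.le_mul_of_pos_right B hq1
      omega
    · intro j hj1 hj2
      have hB1 : 1 ≤ B := by omega
      have h := hq2 (j * B) (Nat.mul_pos hj1 hB1) (Nat.mul_le_mul hj2 (le_refl B))
      have : j * B * q = j * (B * q) := by ring
      rwa [this] at h
  choose f hf1 hf2 hf3 using hQex
  set Q : ℕ → ℕ := fun m => Nat.rec 1 (fun m prev => f m prev) m with hQ
  have hQsucc : ∀ m, Q (m + 1) = f m (Q m) := fun m => rfl
  have hQ1 : ∀ m, m * Q m < Q (m + 1) := fun m => by rw [hQsucc]; exact hf1 m (Q m)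
  have hQ2 : ∀ m, n (K (m + 1)) < Q (m + 1) := fun m => by rw [hQsucc]; exact hf2 m (Q m)
  have hQ3 : ∀ m, ∀ j : ℕ, 1 ≤ j → j ≤ m + 1 → (m + 1) + j * Q (m + 1) ∈ Set.range n :=
    fun m => by rw [hQsucc]; exact hf3 m (Q m)
  have hQpos : ∀ m, 1 ≤ Q m := by
    intro m
    cases m with
    | zero => exact le_refl 1
    | succ m => have := hQ2 m; omega
  -- triangular numbers
  set T : ℕ → ℕ := fun m => Nat.rec 0 (fun m prev => prev + (m + 1)) m with hT
  have hTsucc : ∀ m, T (m + 1) = T m + (m + 1) := fun m => rfl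
  have hTmono : StrictMono T := strictMono_nat_of_lt_succ (fun m => by rw [hTsucc]; omega)
  have hTge : ∀ m, m ≤ T m := by
    intro m
    induction m with
    | zero => exact Nat.zero_le _
    | succ m ih => rw [hTsucc]; omega
  have hMex : ∀ k : ℕ, ∃ m, k < T (m + 1) := fun k => ⟨k, lt_of_lt_of_le (Nat.lt_succ_self k) (hTge (k + 1))⟩
  set M : ℕ → ℕ := fun k => Nat.find (hMex k) with hM
  have hM1 : ∀ k, k < T (M k + 1) := fun k => Nat.find_spec (hMex k)
  have hM2 : ∀ k, T (M k) ≤ k := by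
    intro k
    rcases Nat.eq_zero_or_pos (M k) with h | h
    · rw [h]; exact Nat.zero_le _
    · obtain ⟨m0, hm0⟩ : ∃ m0, M k = m0 + 1 := ⟨M k - 1, by omega⟩
      have := Nat.find_min (hMex k) (show m0 < M k by omega)
      rw [hm0]; omega
  have hMuniq : ∀ k m, T m ≤ k → k < T (m + 1) → M k = m := by
    intro k m h1 h2
    have hle : M k ≤ m := Nat.find_min' (hMex k) h2
    rcases lt_or_eq_of_le hle with h | h
    · exfalso
      have : T (M k + 1) ≤ T m := hTmono.monotone (show M k + 1 ≤ m by omega)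
      have := hM1 k
      omega
    · exact h
  -- the sequence
  refine ⟨fun k => (k - T (M k) + 1) * Q (M k + 1), ?_, ?_, ?_⟩
  · -- strict monotone
    apply strictMono_nat_of_lt_succ
    intro k
    rcases lt_or_eq_of_le (Nat.succ_le_of_lt (hM1 k)) with h | h
    · -- same stage
      have hMk : M (k + 1) = M k := hMuniq (k + 1) (M k) (le_trans (hM2 k) (Nat.le_succ k)) h
      simp only [hMk]
      have h1 : k + 1 - T (M k) + 1 = (k - T (M k) + 1) + 1 := by have := hM2 k; omega
      rw [h1]
      exact (Nat.mul_lt_mul_right (show 0 < Q (M k + 1) from hQpos (M k + 1))).2 (by omega)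
    · -- next stage
      have hMk : M (k + 1) = M k + 1 := by
        apply hMuniq
        · omega
        · rw [hTsucc (M k + 1)]; omega
      rw [hMk]
      have hk : k + 1 - T (M k + 1) + 1 = 1 := by omega
      rw [hk, one_mul]
      have hkv : k - T (M k) + 1 ≤ M k + 1 := by
        have := hTsucc (M k); have := hM2 k; omega
      calc (k - T (M k) + 1) * Q (M k + 1) ≤ (M k + 1) * Q (M k + 1) :=
            Nat.mul_le_mul hkv (le_refl _)
        _ < Q (M k + 1 + 1) := hQ1 (M k + 1)
  · -- AP property
    intro m
    rcases Nat.eq_zero_or_pos m with h | h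
    · exact ⟨1, le_refl 1, fun j hj1 hj2 => by omega⟩
    obtain ⟨m0, hm⟩ : ∃ m0, m = m0 + 1 := ⟨m - 1, by omega⟩
    subst hm
    refine ⟨Q (m0 + 1), hQpos (m0 + 1), ?_⟩
    intro j hj1 hj2
    refine ⟨T m0 + (j - 1), ?_⟩
    have hMk : M (T m0 + (j - 1)) = m0 := by
      apply hMuniq
      · omega
      · rw [hTsucc]; omega
    simp only [hMk]
    congr 1
    omega
  · -- convergence
    intro t
    rw [tendsto_def]
    intro V hV
    obtain ⟨M0, -, hM0⟩ := hUb.toHasBasis.mem_iff.1 hV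
    rw [mem_atTop_sets]
    refine ⟨T (max M0 t), fun k hk => ?_⟩
    simp only [Set.mem_preimage]
    set m := M k with hm
    have hk1 : k < T (m + 1) := hM1 k
    have hk2 : T m ≤ k := hM2 k
    have hTs : T (m + 1) = T m + (m + 1) := hTsucc m
    have hstage : max M0 t ≤ m := by
      by_contra hcon
      push_neg at hcon
      have h1 : T (m + 1) ≤ T (max M0 t) := hTmono.monotone (show m + 1 ≤ max M0 t by omega)
      omega
    set j := k - T m + 1 with hj
    have hj1 : 1 ≤ j := by omega
    have hj2 : j ≤ m + 1 := by omega
    obtain ⟨i, hi⟩ := hQ3 m j hj1 hj2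
    have hiK : K (m + 1) ≤ i := by
      have h1 : n (K (m + 1)) < n i := by
        have : Q (m + 1) ≤ j * Q (m + 1) := Nat.le_mul_of_pos_left (Q (m + 1)) hj1
        have := hQ2 m
        omega
      exact le_of_lt (hn.lt_iff_lt.1 h1)
    have hmem := hK (m + 1) i hiK ((m + 1) - t) (Nat.sub_le _ _)
    have ht : t ≤ m + 1 := by omega
    have heq : n i - ((m + 1) - t) = j * Q (m + 1) + t := by omega
    rw [heq] at hmem
    exact hM0 (hUb.antitone (by omega : M0 ≤ m + 1) hmem)
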